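/- (Complementarity cross terms) If (g, m) and (ḡ, m̄) are two solutions of the Skorokhod problem with the same driving function f and matrix R, and u = m - m̄, then for j = 1, 2 the signed measure (Ru)ⱼ duⱼ is non-positive, i.e., for every Borel set B ⊆ [0,∞), ∫_B (Ru(t))ⱼ d(uⱼ)(t) ≤ 0. -/

import Mathlib

open Set Matrix MeasureTheory

theorem complementarity_cross_terms_nonpos
    (R : Matrix (Fin 2) (Fin 2) ℝ)
    (f g gbar : ℝ → Fin 2 → ℝ)
    (m mbar : Fin 2 → StieltjesFunction ℝ)
    (hmc : ∀ j, Continuous (m j)) (hmbarc : ∀ j, Continuous (mbar j))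
    (hmono : ∀ j, MonotoneOn (fun t => m j t) (Set.Ici 0))
    (hmbarmono : ∀ j, MonotoneOn (fun t => mbar j t) (Set.Ici 0))
    (hm0 : ∀ j, m j 0 = 0) (hmbar0 : ∀ j, mbar j 0 = 0)
    (hgc : ContinuousOn g (Set.Ici 0)) (hgbarc : ContinuousOn gbar (Set.Ici 0))
    (hgpos : ∀ t ∈ Set.Ici (0:ℝ), ∀ j, 0 ≤ g t j)
    (hgbarpos : ∀ t ∈ Set.Ici (0:ℝ), ∀ j, 0 ≤ gbar t j)
    (heq : ∀ t ∈ Set.Ici (0:ℝ), g t = f t + R.mulVec (fun j => m j t))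
    (heqbar : ∀ t ∈ Set.Ici (0:ℝ), gbar t = f t + R.mulVec (fun j => mbar j t))
    (hcompl : ∀ j, ∫⁻ t in Set.Ici (0:ℝ), ENNReal.ofReal (g t j) ∂(m j).measure = 0)
    (hcomplbar : ∀ j,
      ∫⁻ t in Set.Ici (0:ℝ), ENNReal.ofReal (gbar t j) ∂(mbar j).measure = 0) :
    ∀ j : Fin 2, ∀ B : Set ℝ, MeasurableSet B → B ⊆ Set.Ici 0 →
      (∫ t in B, R.mulVec (fun i => m i t - mbar i t) j ∂(m j).measure)
        - (∫ t in B, R.mulVec (fun i => m i t - mbar i t) j ∂(mbar j).measure) ≤ 0 := by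
  intro j B hB hBsub
  -- pointwise identity on Ici 0 : (Ru)_j = g_j - gbar_j
  have hpt : ∀ t ∈ Set.Ici (0:ℝ),
      R.mulVec (fun i => m i t - mbar i t) j = g t j - gbar t j := by
    intro t ht
    have h1 := heq t ht
    have h2 := heqbar t ht
    have hsub : (fun i => m i t - mbar i t)
        = (fun i => m i t) - (fun i => mbar i t) := rfl
    rw [hsub, Matrix.mulVec_sub, Pi.sub_apply, h1, h2]
    simp only [Pi.add_apply]; ring
  -- g_j = 0 a.e. [(m j).measure.restrict (Ici 0)]
  have hgm : ContinuousOn (fun t => g t j) (Set.Ici 0) :=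
    (continuous_apply j).comp_continuousOn hgc
  have haem : AEMeasurable (fun t => ENNReal.ofReal (g t j))
      ((m j).measure.restrict (Set.Ici 0)) :=
    (ENNReal.continuous_ofReal.comp_continuousOn hgm).aemeasurable measurableSet_Ici
  have hg0 : (fun t => g t j) =ᵐ[(m j).measure.restrict (Set.Ici 0)] 0 := by
    have hzero : (fun t => ENNReal.ofReal (g t j))
        =ᵐ[(m j).measure.restrict (Set.Ici 0)] 0 :=
      (lintegral_eq_zero_iff' haem).mp (hcompl j)
    filter_upwards [hzero, ae_restrict_mem measurableSet_Ici] with t ht htmem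
    have h1 : g t j ≤ 0 := ENNReal.ofReal_eq_zero.mp ht
    exact le_antisymm h1 (hgpos t htmem j)
  -- gbar_j = 0 a.e. [(mbar j).measure.restrict (Ici 0)]
  have hgbarm : ContinuousOn (fun t => gbar t j) (Set.Ici 0) :=
    (continuous_apply j).comp_continuousOn hgbarc
  have haembar : AEMeasurable (fun t => ENNReal.ofReal (gbar t j))
      ((mbar j).measure.restrict (Set.Ici 0)) :=
    (ENNReal.continuous_ofReal.comp_continuousOn hgbarm).aemeasurable measurableSet_Ici
  have hgbar0 : (fun t => gbar t j) =ᵐ[(mbar j).measure.restrict (Set.Ici 0)] 0 := by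
    have hzero : (fun t => ENNReal.ofReal (gbar t j))
        =ᵐ[(mbar j).measure.restrict (Set.Ici 0)] 0 :=
      (lintegral_eq_zero_iff' haembar).mp (hcomplbar j)
    filter_upwards [hzero, ae_restrict_mem measurableSet_Ici] with t ht htmem
    have h1 : gbar t j ≤ 0 := ENNReal.ofReal_eq_zero.mp ht
    exact le_antisymm h1 (hgbarpos t htmem j)
  -- first integral ≤ 0
  have key1 : (fun t => R.mulVec (fun i => m i t - mbar i t) j)
      =ᵐ[(m j).measure.restrict B] (fun t => - gbar t j) := by
    filter_upwards [ae_restrict_of_ae_restrict_of_subset hBsub hg0,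
      ae_restrict_mem hB] with t h0 htB
    have := hpt t (hBsub htB)
    rw [this, h0]; ring_nf; simp
  have int1 : (∫ t in B, R.mulVec (fun i => m i t - mbar i t) j ∂(m j).measure) ≤ 0 := by
    rw [integral_congr_ae key1]
    apply integral_nonpos_of_ae
    filter_upwards [ae_restrict_mem hB] with t htB
    simpa using hgbarpos t (hBsub htB) j
  -- second integral ≥ 0
  have key2 : (fun t => R.mulVec (fun i => m i t - mbar i t) j)
      =ᵐ[(mbar j).measure.restrict B] (fun t => g t j) := by
    filter_upwards [ae_restrict_of_ae_restrict_of_subset hBsub hgbar0,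
      ae_restrict_mem hB] with t h0 htB
    have := hpt t (hBsub htB)
    rw [this, h0]; simp
  have int2 : 0 ≤ (∫ t in B, R.mulVec (fun i => m i t - mbar i t) j ∂(mbar j).measure) := by
    rw [integral_congr_ae key2]
    apply integral_nonneg_of_ae
    filter_upwards [ae_restrict_mem hB] with t htB
    exact hgpos t (hBsub htB) j
  linarith
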